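/- Let n ≤ m be positive integers and let I be the monomial ideal of S = K[x_1,...,x_{n+m}] generated by {x_i x_j : 1 ≤ i ≤ j ≤ n+m, i+j ≤ n+m, i ≤ n}. Then the number of degree-4 monomials in I^2 that are products x_i x_j x_h x_k with 1 ≤ i ≤ j ≤ h ≤ k ≤ n+m, j ≤ n, i+k ≤ n+m, j+h ≤ n+m equals dim_K (I^2)_4, and this dimension equals binomial(n+1,2)·binomial(m+1,2). -/

import Mathlib

open MvPolynomial

namespace MonAux

open Finset

/-! ### Pure counting -/

def Qcond (n N : ℕ) (x : ℕ × ℕ × ℕ × ℕ) : Prop :=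
  x.1 ≤ x.2.1 ∧ x.2.1 ≤ x.2.2.1 ∧ x.2.2.1 ≤ x.2.2.2 ∧ x.2.1 ≤ n ∧
    x.1 + x.2.2.2 ≤ N ∧ x.2.1 + x.2.2.1 ≤ N

instance (n N : ℕ) : DecidablePred (Qcond n N) := fun _ => by unfold Qcond; infer_instance

def Qnat (n m : ℕ) : Finset (ℕ × ℕ × ℕ × ℕ) :=
  ((Icc 1 (n+m)) ×ˢ (Icc 1 (n+m)) ×ˢ (Icc 1 (n+m)) ×ˢ (Icc 1 (n+m))).filter (Qcond n (n+m))

lemma mem_Qnat {n m : ℕ} {x : ℕ × ℕ × ℕ × ℕ} :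
    x ∈ Qnat n m ↔ 1 ≤ x.1 ∧ x.1 ≤ x.2.1 ∧ x.2.1 ≤ x.2.2.1 ∧ x.2.2.1 ≤ x.2.2.2 ∧
      x.2.1 ≤ n ∧ x.1 + x.2.2.2 ≤ n + m ∧ x.2.1 + x.2.2.1 ≤ n + m := by
  obtain ⟨a, b, c, d⟩ := x
  simp only [Qnat, mem_filter, mem_product, mem_Icc, Qcond]
  constructor
  · rintro ⟨⟨h1, h2, h3, h4⟩, h5⟩; exact ⟨h1.1, h5⟩
  · rintro ⟨h1, h2, h3, h4, h5, h6, h7⟩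
    refine ⟨⟨⟨h1, by omega⟩, ⟨by omega, by omega⟩, ⟨by omega, by omega⟩, ⟨by omega, by omega⟩⟩, ?_⟩
    exact ⟨h2, h3, h4, h5, h6, h7⟩

lemma two_mul_choose_two (k : ℕ) : 2 * (k+1).choose 2 = k * (k+1) := by
  induction k with
  | zero => rfl
  | succ k ih =>
    have : (k+2).choose 2 = (k+1).choose 1 + (k+1).choose 2 := Nat.choose_succ_succ _ _
    rw [this, Nat.choose_one_right, Nat.mul_add, ih]; ring

lemma sum_Icc_C_sub (l t C : ℕ) (h : l + t ≤ C) :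
    2 * ∑ c ∈ Icc l (l+t), (C - c) = (2*(C-l) - t) * (t+1) := by
  induction t with
  | zero => rw [Nat.add_zero, Finset.Icc_self, Finset.sum_singleton]; omega
  | succ t ih =>
    have ih' := ih (by omega)
    obtain ⟨e, rfl⟩ : ∃ e, C = l + t + 1 + e := ⟨C - (l + t + 1), by omega⟩
    rw [show l + (t+1) = (l + t) + 1 from by omega, Finset.sum_Icc_succ_top (by omega)]
    rw [show l + t + 1 + e - (l + t + 1) = e from by omega,
      show 2*((l + t + 1 + e) - l) - (t+1) = t+1+2*e from by omega]
    rw [show 2*((l + t + 1 + e) - l) - t = t+2+2*e from by omega] at ih'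
    rw [Nat.mul_add, ih']; ring

lemma sum_Icc_K_sub (t KK : ℕ) (h : 2*(t+1) ≤ KK) :
    ∑ a ∈ Icc 1 (t+1), (KK - 2*a) = (t+1)*(KK - t - 2) := by
  induction t with
  | zero => simp only [zero_add, Finset.Icc_self, Finset.sum_singleton]; omega
  | succ t ih =>
    have ih' := ih (by omega)
    obtain ⟨e, rfl⟩ : ∃ e, KK = 2*t + 4 + e := ⟨KK - (2*t+4), by omega⟩
    rw [show t + 1 + 1 = (t + 1) + 1 from rfl, Finset.sum_Icc_succ_top (by omega), ih']
    rw [show 2*t+4+e - 2*(t+1+1) = e from by omega,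
      show 2*t+4+e - t - 2 = t+2+e from by omega,
      show 2*t+4+e - (t+1) - 2 = t+1+e from by omega]
    ring

lemma card_R (n m : ℕ) :
    ((Qnat (n+1) m).filter (fun x => x.2.1 = n+1)).card
      = ∑ p ∈ Icc 1 (n+1) ×ˢ Icc (n+1) m, (n+m+2 - p.1 - p.2) := by
  rw [Finset.card_eq_sum_card_fiberwise
    (f := fun x : ℕ×ℕ×ℕ×ℕ => (x.1, x.2.2.1)) (t := Icc 1 (n+1) ×ˢ Icc (n+1) m) ?_]
  · refine Finset.sum_congr rfl fun p hp => ?_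
    obtain ⟨p1, p2⟩ := p
    simp only [mem_product, mem_Icc] at hp
    have : (((Qnat (n+1) m).filter fun x => x.2.1 = n+1).filter
          (fun x => (x.1, x.2.2.1) = (p1, p2)))
        = (Icc p2 (n+1+m - p1)).image (fun d => (p1, n+1, p2, d)) := by
      ext ⟨a,b,c,d⟩
      simp only [mem_filter, mem_image, mem_Icc, mem_Qnat, Prod.mk.injEq]
      constructor
      · rintro ⟨⟨⟨q1,q2,q3,q4,q5,q6,q7⟩, hb⟩, ha, hc⟩
        exact ⟨d, ⟨by omega, by omega⟩, by omega, by omega, by omega, rfl⟩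
      · rintro ⟨d', ⟨hd1, hd2⟩, h1, h2, h3, h4⟩
        exact ⟨⟨⟨by omega, by omega, by omega, by omega, by omega, by omega, by omega⟩,
          by omega⟩, by omega, by omega⟩
    rw [this, Finset.card_image_of_injective _ (fun x y hxy => by
      simpa using congrArg (fun z : ℕ×ℕ×ℕ×ℕ => z.2.2.2) hxy), Nat.card_Icc]
    omega
  · intro x hx
    simp only [Finset.mem_coe, mem_filter, mem_Qnat] at hx
    simp only [Finset.mem_coe, mem_product, mem_Icc]
    omega

theorem card_Qnat : ∀ n m : ℕ, n ≤ m → (Qnat n m).card = (n+1).choose 2 * (m+1).choose 2 := by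
  intro n
  induction n with
  | zero =>
    intro m _
    have he : Qnat 0 m = ∅ := by
      ext x; simp only [mem_Qnat, Finset.notMem_empty, iff_false]; omega
    rw [he]; simp
  | succ n ih =>
    intro m hm
    have hsplit : Qnat (n+1) m
        = Qnat n (m+1) ∪ (Qnat (n+1) m).filter (fun x => x.2.1 = n+1) := by
      ext x
      simp only [mem_union, mem_filter, mem_Qnat]
      omega
    have hdisj : Disjoint (Qnat n (m+1)) ((Qnat (n+1) m).filter (fun x => x.2.1 = n+1)) := by
      rw [Finset.disjoint_left]
      intro x hx hx'
      simp only [mem_filter, mem_Qnat] at hx hx'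
      omega
    rw [hsplit, Finset.card_union_of_disjoint hdisj, ih (m+1) (by omega), card_R,
      Finset.sum_product]
    set S := ∑ a ∈ Icc 1 (n+1), ∑ c ∈ Icc (n+1) m, (n+m+2 - a - c) with hS
    have h2S : 2 * S = ((n+1) * (m+1)) * (m-n) := by
      rw [hS, Finset.mul_sum]
      have hinner : ∀ a ∈ Icc 1 (n+1),
          2 * ∑ c ∈ Icc (n+1) m, (n+m+2 - a - c) = (m+n+3 - 2*a) * (m-n) := by
        intro a ha
        simp only [mem_Icc] at ha
        have h := sum_Icc_C_sub (n+1) (m-n-1) (n+m+2-a) (by omega)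
        rw [show (n+1)+(m-n-1) = m from by omega] at h
        rw [h]
        congr 1 <;> omega
      rw [Finset.sum_congr rfl hinner, ← Finset.sum_mul,
        sum_Icc_K_sub n (m+n+3) (by omega),
        show m+n+3-n-2 = m+1 from by omega]
    have key : 4 * ((n+1).choose 2 * (m+1+1).choose 2 + S)
        = 4 * ((n+1+1).choose 2 * (m+1).choose 2) := by
      have e1 : 4 * ((n+1).choose 2 * (m+1+1).choose 2)
          = (n*(n+1)) * ((m+1)*(m+2)) := by
        rw [show (4:ℕ) = 2*2 from rfl]
        calc 2*2*((n+1).choose 2 * (m+1+1).choose 2)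
            = (2*(n+1).choose 2) * (2*(m+2).choose 2) := by ring_nf
          _ = (n*(n+1)) * ((m+1)*(m+2)) := by rw [two_mul_choose_two, two_mul_choose_two]
      have e2 : 4 * ((n+1+1).choose 2 * (m+1).choose 2)
          = ((n+1)*(n+2)) * (m*(m+1)) := by
        rw [show (4:ℕ) = 2*2 from rfl]
        calc 2*2*((n+2).choose 2 * (m+1).choose 2)
            = (2*(n+2).choose 2) * (2*(m+1).choose 2) := by ring_nf
          _ = ((n+1)*(n+2)) * (m*(m+1)) := by rw [two_mul_choose_two, two_mul_choose_two]
      rw [Nat.mul_add, e1, e2, show 4*S = 2*(2*S) from by ring, h2S]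
      obtain ⟨e, rfl⟩ : ∃ e, m = n + 1 + e := ⟨m - n - 1, by omega⟩
      rw [show n+1+e - n = e+1 from by omega]
      ring
    omega

/-! ### Quadruples of variables -/

noncomputable def quadF {N : ℕ} (x : Fin N × Fin N × Fin N × Fin N) : Fin N →₀ ℕ :=
  Finsupp.single x.1 1 + Finsupp.single x.2.1 1 + Finsupp.single x.2.2.1 1
    + Finsupp.single x.2.2.2 1

lemma coe_four {N : ℕ} (a b c d : Fin N) :
    ({a} + {b} + {c} + {d} : Multiset (Fin N)) = ↑[a,b,c,d] := rfl

lemma quad_inj {N : ℕ} {i j h k i' j' h' k' : Fin N}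
    (s1 : i ≤ j) (s2 : j ≤ h) (s3 : h ≤ k)
    (t1 : i' ≤ j') (t2 : j' ≤ h') (t3 : h' ≤ k')
    (he : Finsupp.single i 1 + Finsupp.single j 1 + Finsupp.single h 1 + Finsupp.single k 1
        = Finsupp.single i' 1 + Finsupp.single j' 1 + Finsupp.single h' 1
            + Finsupp.single k' 1) :
    i = i' ∧ j = j' ∧ h = h' ∧ k = k' := by
  have hm := congrArg Finsupp.toMultiset he
  simp only [map_add, Finsupp.toMultiset_single, one_smul] at hm
  rw [coe_four, coe_four, Multiset.coe_eq_coe] at hm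
  have hl := List.Perm.eq_of_pairwise' (r := (· ≤ ·))
    (by simp [List.pairwise_cons]
        exact ⟨⟨s1, s1.trans s2, (s1.trans s2).trans s3⟩, ⟨s2, s2.trans s3⟩, s3⟩)
    (by simp [List.pairwise_cons]
        exact ⟨⟨t1, t1.trans t2, (t1.trans t2).trans t3⟩, ⟨t2, t2.trans t3⟩, t3⟩) hm
  simpa using hl

/-- The sorted-quadruple condition. -/
def scond (n m : ℕ) (i j h k : Fin (n+m)) : Prop :=
  i ≤ j ∧ j ≤ h ∧ h ≤ k ∧ ((j:ℕ)+1) ≤ n ∧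
    ((i:ℕ)+1) + ((k:ℕ)+1) ≤ n+m ∧ ((j:ℕ)+1) + ((h:ℕ)+1) ≤ n+m

instance (n m : ℕ) (i j h k : Fin (n+m)) : Decidable (scond n m i j h k) := by
  unfold scond; infer_instance

def Esort (n m : ℕ) : Set (Fin (n+m) →₀ ℕ) :=
  quadF '' {x | scond n m x.1 x.2.1 x.2.2.1 x.2.2.2}

lemma sort_half {n m : ℕ} {a b c d : Fin (n+m)}
    (hab : a ≤ b) (hab2 : (a:ℕ)+1+((b:ℕ)+1) ≤ n+m) (hab3 : (a:ℕ)+1 ≤ n)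
    (hcd : c ≤ d) (hcd2 : (c:ℕ)+1+((d:ℕ)+1) ≤ n+m) (hcd3 : (c:ℕ)+1 ≤ n)
    (hac : (a:ℕ) ≤ (c:ℕ)) :
    ∃ i j h k : Fin (n+m), scond n m i j h k ∧
      Finsupp.single a 1 + Finsupp.single b 1 + Finsupp.single c 1 + Finsupp.single d 1
        = Finsupp.single i 1 + Finsupp.single j 1 + Finsupp.single h 1
            + Finsupp.single k 1 := by
  rw [Fin.le_def] at hab hcd
  rcases le_total (b:ℕ) (d:ℕ) with hbd | hdb
  · rcases le_total (b:ℕ) (c:ℕ) with hbc | hcb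
    · exact ⟨a, b, c, d, ⟨Fin.le_def.mpr (by omega), Fin.le_def.mpr (by omega),
        Fin.le_def.mpr (by omega), by omega, by omega, by omega⟩, rfl⟩
    · exact ⟨a, c, b, d, ⟨Fin.le_def.mpr (by omega), Fin.le_def.mpr (by omega),
        Fin.le_def.mpr (by omega), by omega, by omega, by omega⟩, by abel⟩
  · exact ⟨a, c, d, b, ⟨Fin.le_def.mpr (by omega), Fin.le_def.mpr (by omega),
      Fin.le_def.mpr (by omega), by omega, by omega, by omega⟩, by abel⟩

lemma sort_full {n m : ℕ} {a b c d : Fin (n+m)}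
    (hab : a ≤ b) (hab2 : (a:ℕ)+1+((b:ℕ)+1) ≤ n+m) (hab3 : (a:ℕ)+1 ≤ n)
    (hcd : c ≤ d) (hcd2 : (c:ℕ)+1+((d:ℕ)+1) ≤ n+m) (hcd3 : (c:ℕ)+1 ≤ n) :
    ∃ i j h k : Fin (n+m), scond n m i j h k ∧
      Finsupp.single a 1 + Finsupp.single b 1 + Finsupp.single c 1 + Finsupp.single d 1
        = Finsupp.single i 1 + Finsupp.single j 1 + Finsupp.single h 1
            + Finsupp.single k 1 := by
  rcases le_total (a:ℕ) (c:ℕ) with hac | hca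
  · exact sort_half hab hab2 hab3 hcd hcd2 hcd3 hac
  · obtain ⟨i, j, h, k, hsc, hsum⟩ := sort_half hcd hcd2 hcd3 hab hab2 hab3 hca
    exact ⟨i, j, h, k, hsc, by rw [← hsum]; abel⟩

/-! ### Algebra -/

variable {K : Type*} [Field K] {σ : Type*} [Fintype σ] [DecidableEq σ]

lemma hc_mul (p t : MvPolynomial σ K) (ht : t ∈ homogeneousSubmodule σ K 4) :
    homogeneousComponent 4 (p * t) = coeff 0 p • t := by
  conv_lhs => rw [← sum_homogeneousComponent p, Finset.sum_mul, map_sum]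
  rw [Finset.sum_eq_single_of_mem 0 (Finset.mem_range.mpr (Nat.succ_pos _))]
  · have hm0 : (homogeneousComponent 0 p) * t ∈ homogeneousSubmodule σ K 4 := by
      rw [mem_homogeneousSubmodule]
      simpa using (homogeneousComponent_isHomogeneous 0 p).mul
        ((mem_homogeneousSubmodule 4 t).mp ht)
    rw [homogeneousComponent_of_mem hm0, if_pos rfl, homogeneousComponent_zero, smul_eq_C_mul]
  · intro b _ hb
    have hmb : (homogeneousComponent b p) * t ∈ homogeneousSubmodule σ K (b+4) := by
      rw [mem_homogeneousSubmodule]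
      exact (homogeneousComponent_isHomogeneous b p).mul
        ((mem_homogeneousSubmodule 4 t).mp ht)
    rw [homogeneousComponent_of_mem hmb, if_neg (by omega)]

lemma graded_piece (T : Set (MvPolynomial σ K))
    (hT : ∀ t ∈ T, t ∈ homogeneousSubmodule σ K 4) :
    Submodule.restrictScalars K (Ideal.span T) ⊓ homogeneousSubmodule σ K 4
      = Submodule.span K T := by
  apply le_antisymm
  · intro x hx
    obtain ⟨hx1, hx2⟩ := Submodule.mem_inf.mp hx
    rw [Submodule.restrictScalars_mem] at hx1
    rw [Ideal.span, Submodule.mem_span_set] at hx1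
    obtain ⟨c, hsupp, rfl⟩ := hx1
    have hx2' : homogeneousComponent 4 (c.sum fun i r => r • i) = c.sum fun i r => r • i := by
      rw [homogeneousComponent_of_mem hx2, if_pos rfl]
    rw [← hx2']
    rw [Finsupp.sum, map_sum]
    apply Submodule.sum_mem
    intro t htc
    rw [smul_eq_mul, hc_mul _ _ (hT t (hsupp htc))]
    exact Submodule.smul_mem _ _ (Submodule.subset_span (hsupp htc))
  · rw [Submodule.span_le]
    intro t ht
    exact Submodule.mem_inf.mpr
      ⟨Submodule.restrictScalars_mem _ _ _ |>.mpr (Ideal.subset_span ht), hT t ht⟩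

end MonAux

open MonAux Finset in
/-- Let `n ≤ m` be positive integers and `I ⊆ S = K[x_1,…,x_{n+m}]` the monomial ideal
generated by `{x_i x_j : 1 ≤ i ≤ j ≤ n+m, i+j ≤ n+m, i ≤ n}` (variables are indexed by
`Fin (n+m)`, with `x_i` corresponding to the index `i-1`).  Then the number of degree-4
monomials of `I²` of the form `x_i x_j x_h x_k` with `1 ≤ i ≤ j ≤ h ≤ k ≤ n+m`, `j ≤ n`,
`i+k ≤ n+m`, `j+h ≤ n+m` equals `dim_K (I²)_4`, and this dimension equals
`C(n+1,2)·C(m+1,2)`. -/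
theorem monomial_count_eq_finrank_I_sq (K : Type*) [Field K] (n m : ℕ)
    (hn : 0 < n) (hnm : n ≤ m) :
    let I : Ideal (MvPolynomial (Fin (n + m)) K) :=
      Ideal.span {p | ∃ i j : Fin (n + m), i ≤ j ∧ (i : ℕ) + 1 + ((j : ℕ) + 1) ≤ n + m ∧
        (i : ℕ) + 1 ≤ n ∧ p = monomial (Finsupp.single i 1 + Finsupp.single j 1) (1 : K)}
    let D : ℕ := Module.finrank K
      ↥(Submodule.restrictScalars K ((I ^ 2 : Ideal (MvPolynomial (Fin (n + m)) K)))
          ⊓ homogeneousSubmodule (Fin (n + m)) K 4)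
    Set.ncard {a : Fin (n + m) →₀ ℕ |
        monomial a (1 : K) ∈ I ^ 2 ∧
        ∃ i j h k : Fin (n + m), i ≤ j ∧ j ≤ h ∧ h ≤ k ∧
          (j : ℕ) + 1 ≤ n ∧ ((i : ℕ) + 1) + ((k : ℕ) + 1) ≤ n + m ∧
          ((j : ℕ) + 1) + ((h : ℕ) + 1) ≤ n + m ∧
          a = Finsupp.single i 1 + Finsupp.single j 1 + Finsupp.single h 1 +
            Finsupp.single k 1} = D ∧
      D = (n + 1).choose 2 * (m + 1).choose 2 := by
  intro I D
  have hI : I = Ideal.span {p | ∃ i j : Fin (n + m), i ≤ j ∧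
      (i : ℕ) + 1 + ((j : ℕ) + 1) ≤ n + m ∧ (i : ℕ) + 1 ≤ n ∧
      p = monomial (Finsupp.single i 1 + Finsupp.single j 1) (1 : K)} := rfl
  -- membership of sorted quadruples in I^2
  have mem_sq : ∀ i j h k : Fin (n+m), scond n m i j h k →
      monomial (quadF (i, j, h, k)) (1:K) ∈ I ^ 2 := by
    rintro i j h k ⟨s1, s2, s3, s4, s5, s6⟩
    rw [pow_two, hI]
    have h1 : monomial (Finsupp.single i 1 + Finsupp.single k 1) (1:K) ∈
        Ideal.span {p | ∃ i j : Fin (n + m), i ≤ j ∧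
          (i : ℕ) + 1 + ((j : ℕ) + 1) ≤ n + m ∧ (i : ℕ) + 1 ≤ n ∧
          p = monomial (Finsupp.single i 1 + Finsupp.single j 1) (1 : K)} :=
      Ideal.subset_span ⟨i, k, (s1.trans s2).trans s3, by omega,
        by have := Fin.le_def.mp s1; omega, rfl⟩
    have h2 : monomial (Finsupp.single j 1 + Finsupp.single h 1) (1:K) ∈
        Ideal.span {p | ∃ i j : Fin (n + m), i ≤ j ∧
          (i : ℕ) + 1 + ((j : ℕ) + 1) ≤ n + m ∧ (i : ℕ) + 1 ≤ n ∧
          p = monomial (Finsupp.single i 1 + Finsupp.single j 1) (1 : K)} :=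
      Ideal.subset_span ⟨j, h, s2, by omega, by omega, rfl⟩
    have := Ideal.mul_mem_mul h1 h2
    rw [monomial_mul, one_mul] at this
    have heq : quadF (i, j, h, k) = (Finsupp.single i 1 + Finsupp.single k 1)
        + (Finsupp.single j 1 + Finsupp.single h 1) := by
      unfold quadF; dsimp only; abel
    rw [heq]
    exact this
  -- the set in the statement is Esort
  have hset : {a : Fin (n + m) →₀ ℕ |
      monomial a (1 : K) ∈ I ^ 2 ∧
      ∃ i j h k : Fin (n + m), i ≤ j ∧ j ≤ h ∧ h ≤ k ∧
        (j : ℕ) + 1 ≤ n ∧ ((i : ℕ) + 1) + ((k : ℕ) + 1) ≤ n + m ∧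
        ((j : ℕ) + 1) + ((h : ℕ) + 1) ≤ n + m ∧
        a = Finsupp.single i 1 + Finsupp.single j 1 + Finsupp.single h 1 +
          Finsupp.single k 1} = Esort n m := by
    ext a
    constructor
    · rintro ⟨-, i, j, h, k, h1, h2, h3, h4, h5, h6, rfl⟩
      exact ⟨(i, j, h, k), ⟨h1, h2, h3, h4, h5, h6⟩, rfl⟩
    · rintro ⟨⟨i, j, h, k⟩, hsc, rfl⟩
      simp only [Set.mem_setOf_eq] at hsc
      try dsimp only at hsc
      obtain ⟨h1, h2, h3, h4, h5, h6⟩ := hsc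
      exact ⟨mem_sq i j h k ⟨h1, h2, h3, h4, h5, h6⟩, i, j, h, k, h1, h2, h3, h4, h5, h6, rfl⟩
  -- I^2 as span of monomials over Esort
  have hI2 : I ^ 2 = Ideal.span ((fun a => monomial a (1:K)) '' Esort n m) := by
    rw [pow_two, hI, Ideal.span_mul_span']
    congr 1
    ext p
    constructor
    · rw [Set.mem_mul]
      rintro ⟨p1, ⟨i, j, hij1, hij2, hij3, rfl⟩, p2, ⟨k, l, hkl1, hkl2, hkl3, rfl⟩, rfl⟩
      obtain ⟨i', j', h', k', hsc, hsum⟩ := sort_full hij1 hij2 hij3 hkl1 hkl2 hkl3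
      refine ⟨quadF (i', j', h', k'), ⟨(i', j', h', k'), hsc, rfl⟩, ?_⟩
      rw [monomial_mul, one_mul]
      congr 1
      unfold quadF
      dsimp only
      rw [← hsum]
      abel
    · rintro ⟨a, ⟨⟨i, j, h, k⟩, hsc, rfl⟩, rfl⟩
      simp only [Set.mem_setOf_eq] at hsc
      try dsimp only at hsc
      obtain ⟨h1, h2, h3, h4, h5, h6⟩ := hsc
      rw [Set.mem_mul]
      refine ⟨monomial (Finsupp.single i 1 + Finsupp.single k 1) (1:K),
        ⟨i, k, (h1.trans h2).trans h3, by omega, by have := Fin.le_def.mp h1; omega, rfl⟩,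
        monomial (Finsupp.single j 1 + Finsupp.single h 1) (1:K),
        ⟨j, h, h2, by omega, by omega, rfl⟩, ?_⟩
      rw [monomial_mul, one_mul]
      congr 1
      unfold quadF
      dsimp only
      abel
  -- homogeneity of the monomials
  have hhom : ∀ t ∈ (fun a => monomial a (1:K)) '' Esort n m,
      t ∈ homogeneousSubmodule (Fin (n+m)) K 4 := by
    rintro t ⟨a, ⟨⟨i, j, h, k⟩, hsc, rfl⟩, rfl⟩
    rw [mem_homogeneousSubmodule]
    apply isHomogeneous_monomial
    unfold quadF
    dsimp only
    simp [Finsupp.degree_eq_weight_one, map_add, Finsupp.weight_apply, Finsupp.sum_single_index]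
  -- finiteness of Esort
  have hfin : (Esort n m).Finite := (Set.toFinite _).image _
  haveI : Fintype ↥(Esort n m) := hfin.fintype
  -- D equals the cardinality of Esort
  have hD : D = (Esort n m).ncard := by
    show Module.finrank K _ = _
    rw [hI2, graded_piece _ hhom]
    have lin : LinearIndependent K
        (fun a : ↥(Esort n m) => monomial (a : Fin (n+m) →₀ ℕ) (1:K)) := by
      have h0 := (basisMonomials (Fin (n+m)) K).linearIndependent.comp
        (Subtype.val : ↥(Esort n m) → (Fin (n+m) →₀ ℕ)) Subtype.val_injective
      rwa [show ⇑(basisMonomials (Fin (n+m)) K) ∘ (Subtype.val : ↥(Esort n m) → _)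
        = fun a : ↥(Esort n m) => monomial (a : Fin (n+m) →₀ ℕ) (1:K) from by
          funext a; rw [Function.comp_apply, coe_basisMonomials]] at h0
    rw [Set.image_eq_range, finrank_span_eq_card lin,
      Set.ncard_eq_toFinset_card', Set.toFinset_card]
  -- cardinality of Esort equals card Qnat
  have hinj : Set.InjOn quadF {x : Fin (n+m) × Fin (n+m) × Fin (n+m) × Fin (n+m) |
      scond n m x.1 x.2.1 x.2.2.1 x.2.2.2} := by
    rintro ⟨i, j, h, k⟩ hx ⟨i', j', h', k'⟩ hy hxy
    obtain ⟨s1, s2, s3, -, -, -⟩ := hx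
    obtain ⟨t1, t2, t3, -, -, -⟩ := hy
    unfold quadF at hxy
    dsimp only at hxy s1 s2 s3 t1 t2 t3
    obtain ⟨e1, e2, e3, e4⟩ := quad_inj s1 s2 s3 t1 t2 t3 hxy
    simp [e1, e2, e3, e4]
  have hcard : (Esort n m).ncard = (Qnat n m).card := by
    rw [Esort, Set.ncard_image_of_injOn hinj, Set.ncard_eq_toFinset_card']
    apply Finset.card_nbij
      (i := fun x : Fin (n+m) × Fin (n+m) × Fin (n+m) × Fin (n+m) =>
        ((x.1:ℕ)+1, (x.2.1:ℕ)+1, (x.2.2.1:ℕ)+1, (x.2.2.2:ℕ)+1))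
    · rintro ⟨i, j, h, k⟩ hx
      rw [Finset.mem_coe, Set.mem_toFinset] at hx
      obtain ⟨s1, s2, s3, s4, s5, s6⟩ := hx
      rw [Fin.le_def] at s1 s2 s3
      dsimp only at s1 s2 s3 s4 s5 s6
      rw [Finset.mem_coe, mem_Qnat]
      dsimp only
      exact ⟨by omega, by omega, by omega, by omega, by omega, by omega, by omega⟩
    · rintro ⟨i, j, h, k⟩ hx ⟨i', j', h', k'⟩ hy hxy
      try dsimp only at hxy
      simp only [Prod.mk.injEq] at hxy
      obtain ⟨e1, e2, e3, e4⟩ := hxy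
      simp only [Prod.mk.injEq]
      exact ⟨Fin.ext (by omega), Fin.ext (by omega), Fin.ext (by omega), Fin.ext (by omega)⟩
    · rintro ⟨a, b, c, d⟩ hy
      simp only [Finset.mem_coe, mem_Qnat] at hy
      obtain ⟨q1, q2, q3, q4, q5, q6, q7⟩ := hy
      refine ⟨(⟨a-1, by omega⟩, ⟨b-1, by omega⟩, ⟨c-1, by omega⟩, ⟨d-1, by omega⟩), ?_, ?_⟩
      · simp only [Finset.mem_coe, Set.mem_toFinset, Set.mem_setOf_eq]
        exact ⟨Fin.mk_le_mk.mpr (by omega), Fin.mk_le_mk.mpr (by omega),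
          Fin.mk_le_mk.mpr (by omega), (by omega : b-1+1 ≤ n),
          (by omega : (a-1+1) + (d-1+1) ≤ n+m), (by omega : (b-1+1) + (c-1+1) ≤ n+m)⟩
      · dsimp only
        simp only [Prod.mk.injEq]
        exact ⟨by omega, by omega, by omega, by omega⟩
  constructor
  · rw [hset, hD]
  · rw [hD, hcard]
    exact card_Qnat n m hnm
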